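/- arXiv:0909.4806 — 4 statements merged into one kernel-verified Lean document; each statement's English description precedes it below -/
import Mathlib

section
/- Let A be an abelian group and H a divisible subgroup which contains, for every positive integer n, an element of order exactly n. Let t ∈ A be a torsion element and let n₀ be the smallest positive integer with n₀·t ∈ H. Then for a positive integer m, the coset t + H contains an element of order exactly m if and only if n₀ divides m. -/
theorem stmt_7 (A : Type*) [AddCommGroup A] (H : AddSubgroup A)
    (hdiv : ∀ h ∈ H, ∀ n : ℕ, 0 < n → ∃ h' ∈ H, n • h' = h)
    (hord : ∀ n : ℕ, 0 < n → ∃ h ∈ H, addOrderOf h = n)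
    (t : A) (ht : IsOfFinAddOrder t) (n₀ : ℕ)
    (hn₀ : IsLeast {n : ℕ | 0 < n ∧ n • t ∈ H} n₀)
    (m : ℕ) (hm : 0 < m) :
    (∃ s : A, s - t ∈ H ∧ addOrderOf s = m) ↔ n₀ ∣ m := by
  obtain ⟨⟨hn₀pos, hn₀H⟩, hleast⟩ := hn₀
  -- key: any positive n with n • t ∈ H is divisible by n₀
  have key : ∀ n : ℕ, 0 < n → n • t ∈ H → n₀ ∣ n := by
    intro n hn hnH
    have hr : (n % n₀) • t ∈ H := by
      have heq : (n % n₀) • t = n • t - (n / n₀) • (n₀ • t) := by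
        rw [smul_smul, eq_sub_iff_add_eq, ← add_smul]
        rw [Nat.mod_add_div' n n₀]
      rw [heq]
      exact H.sub_mem hnH (H.nsmul_mem hn₀H _)
    rcases Nat.eq_zero_or_pos (n % n₀) with h0 | hpos
    · exact Nat.dvd_of_mod_eq_zero h0
    · exact absurd (hleast ⟨hpos, hr⟩) (Nat.not_le.2 (Nat.mod_lt n hn₀pos))
  -- any element of the coset has order divisible by n₀
  have coset : ∀ s : A, s - t ∈ H → ∀ e : ℕ, 0 < e → e • s = 0 → e • t ∈ H := by
    intro s hs e he hes
    have : e • t = -(e • (s - t)) := by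
      rw [smul_sub, hes, zero_sub, neg_neg]
    rw [this]
    exact H.neg_mem (H.nsmul_mem hs _)
  constructor
  · rintro ⟨s, hsH, rfl⟩
    have hms : addOrderOf s • s = 0 := addOrderOf_nsmul_eq_zero s
    exact key _ hm (coset s hsH _ hm hms)
  · intro hdvd
    obtain ⟨h', hh'H, hh'⟩ := hdiv (n₀ • t) hn₀H n₀ hn₀pos
    obtain ⟨h, hhH, hh⟩ := hord m hm
    refine ⟨(t - h') + h, ?_, ?_⟩
    · have : (t - h') + h - t = h - h' := by abel
      rw [this]; exact H.sub_mem hhH hh'H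
    · set u := t - h' with hu
      have hu0 : n₀ • u = 0 := by rw [hu, smul_sub, hh', sub_self]
      have hmu : m • u = 0 := by
        obtain ⟨k, rfl⟩ := hdvd
        rw [mul_comm, mul_smul, hu0, smul_zero]
      have hmh : m • h = 0 := by rw [← hh]; exact addOrderOf_nsmul_eq_zero h
      have hms : m • (u + h) = 0 := by rw [smul_add, hmu, hmh, add_zero]
      have hfin : IsOfFinAddOrder (u + h) :=
        isOfFinAddOrder_iff_nsmul_eq_zero.2 ⟨m, hm, hms⟩
      set e := addOrderOf (u + h) with he
      have hepos : 0 < e := hfin.addOrderOf_pos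
      have hes : e • (u + h) = 0 := addOrderOf_nsmul_eq_zero _
      have hedvd : e ∣ m := addOrderOf_dvd_of_nsmul_eq_zero hms
      have hstH : (u + h) - t ∈ H := by
        have : (u + h) - t = h - h' := by rw [hu]; abel
        rw [this]; exact H.sub_mem hhH hh'H
      have hn₀e : n₀ ∣ e := key e hepos (coset _ hstH e hepos hes)
      have heu : e • u = 0 := by
        obtain ⟨k, hk⟩ := hn₀e
        rw [hk, mul_comm, mul_smul, hu0, smul_zero]
      have heh : e • h = 0 := by
        have := hes
        rwa [smul_add, heu, zero_add] at this
      have hmde : m ∣ e := hh ▸ addOrderOf_dvd_of_nsmul_eq_zero heh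
      exact Nat.dvd_antisymm hedvd hmde
end

section
/- Let ℓ be a prime, n and d positive integers, and M a d×d matrix with integer entries such that c := v_ℓ(det M) satisfies c ≤ n (in particular det M ≠ 0). Then the image of the induced endomorphism of (ℤ/ℓ^n ℤ)^d has index exactly ℓ^c. -/
lemma aux_inj {d : ℕ} (M : Matrix (Fin d) (Fin d) ℤ) (hM : M.det ≠ 0) :
    Function.Injective M.mulVecLin := by
  rw [← LinearMap.ker_eq_bot, LinearMap.ker_eq_bot']
  intro x hx
  have h : M.adjugate.mulVec (M.mulVec x) = 0 := by
    rw [show M.mulVec x = 0 from hx, Matrix.mulVec_zero]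
  rw [Matrix.mulVec_mulVec, Matrix.adjugate_mul, Matrix.smul_mulVec,
    Matrix.one_mulVec, smul_eq_zero] at h
  exact h.resolve_left hM

lemma aux_index {d : ℕ} (M : Matrix (Fin d) (Fin d) ℤ) (hM : M.det ≠ 0) :
    (LinearMap.range M.mulVecLin).toAddSubgroup.index = M.det.natAbs := by
  classical
  set K := LinearMap.range M.mulVecLin with hK
  let e : (Fin d → ℤ) ≃ₗ[ℤ] K := LinearEquiv.ofInjective _ (aux_inj M hM)
  obtain ⟨m, bM, bN, f, a, hsnf⟩ := K.smithNormalForm (Pi.basisFun ℤ (Fin d))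
  have hne : K.toAddSubgroup.index ≠ 0 :=
    Int.submodule_toAddSubgroup_index_ne_zero_iff.mpr ⟨e.symm⟩
  let snf : Module.Basis.SmithNormalForm K (Fin d) m := ⟨bM, bN, f, a, hsnf⟩
  have hm : m = d := by simpa using snf.toAddSubgroup_index_ne_zero_iff.mp hne
  subst hm
  have hidx : K.toAddSubgroup.index = ∏ i : Fin m, (a i).natAbs := by
    rw [snf.toAddSubgroup_index_eq_ite]
    simp [snf, Ideal.span_singleton_toAddSubgroup_eq_zmultiples, Int.index_zmultiples]
  have hbij : Function.Bijective f := (Finite.injective_iff_bijective).mp f.injective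
  let σ : Fin m ≃ Fin m := Equiv.ofBijective f hbij
  let e' : (Fin m → ℤ) ≃ₗ[ℤ] K := bM.equiv bN σ.symm
  have hassoc := LinearMap.associated_det_comp_equiv ((Submodule.subtype K).restrictScalars ℤ) e e'
  have h1 : (Submodule.subtype K).restrictScalars ℤ ∘ₗ (e : (Fin m → ℤ) →ₗ[ℤ] K)
      = M.mulVecLin := by
    ext x; rfl
  set g : (Fin m → ℤ) →ₗ[ℤ] (Fin m → ℤ) :=
    (Submodule.subtype K).restrictScalars ℤ ∘ₗ (e' : (Fin m → ℤ) →ₗ[ℤ] K) with hg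
  have hga : ∀ i, g (bM i) = a (σ.symm i) • bM i := by
    intro i
    simp only [hg, LinearMap.comp_apply, e', LinearMap.restrictScalars_apply,
      Submodule.subtype_apply, LinearEquiv.coe_coe]
    rw [Module.Basis.equiv_apply, hsnf, show f (σ.symm i) = i from σ.apply_symm_apply i]
  have hdetg : LinearMap.det g = ∏ i : Fin m, a (σ.symm i) := by
    rw [← LinearMap.det_toMatrix bM]
    have : LinearMap.toMatrix bM bM g = Matrix.diagonal (fun i => a (σ.symm i)) := by
      ext i j
      rw [LinearMap.toMatrix_apply, hga, map_smul, Module.Basis.repr_self, Finsupp.smul_single,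
        smul_eq_mul, mul_one]
      by_cases h : i = j
      · rw [h, Matrix.diagonal_apply_eq, Finsupp.single_eq_same]
      · rw [Matrix.diagonal_apply_ne _ h, Finsupp.single_eq_of_ne h]
    rw [this, Matrix.det_diagonal]
  have hdetM : LinearMap.det M.mulVecLin = M.det := by
    rw [← Matrix.toLin'_apply', LinearMap.det_toLin']
  have hnat : M.det.natAbs = (∏ i : Fin m, a (σ.symm i)).natAbs := by
    rw [← hdetM, ← hdetg]
    exact Int.natAbs_eq_iff_associated.mpr (by rw [h1] at hassoc; exact hassoc)
  rw [hidx, hnat, show (∏ i : Fin m, a (σ.symm i)).natAbs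
      = ∏ i : Fin m, (a (σ.symm i)).natAbs from map_prod Int.natAbsHom _ _]
  exact (Equiv.prod_comp σ.symm fun i => (a i).natAbs).symm


theorem stmt_8 (ℓ : ℕ) (hℓ : ℓ.Prime) (n d : ℕ) (hn : 0 < n) (hd : 0 < d)
    (M : Matrix (Fin d) (Fin d) ℤ) (c : ℕ)
    (hc1 : (ℓ : ℤ) ^ c ∣ M.det) (hc2 : ¬ (ℓ : ℤ) ^ (c + 1) ∣ M.det)
    (hcn : c ≤ n) :
    (LinearMap.range
        (Matrix.mulVecLin (M.map (Int.cast : ℤ → ZMod (ℓ ^ n))))).toAddSubgroup.index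
      = ℓ ^ c := by
  classical
  have hℓ1 : 1 < ℓ := hℓ.one_lt
  haveI : NeZero (ℓ ^ n) := ⟨pow_ne_zero n hℓ.pos.ne'⟩
  obtain ⟨t, ht⟩ := hc1
  have hℓt : ¬ (ℓ : ℤ) ∣ t := fun ⟨s, hs⟩ => hc2 ⟨s, by rw [ht, hs]; ring⟩
  have hdet0 : M.det ≠ 0 := fun h => hc2 (h ▸ dvd_zero _)
  have ht0 : t ≠ 0 := fun h => hdet0 (by rw [ht, h, mul_zero])
  set K : Submodule ℤ (Fin d → ℤ) := LinearMap.range M.mulVecLin with hKdef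
  set L : Submodule ℤ (Fin d → ℤ) :=
    Submodule.pi Set.univ (fun _ => Ideal.span {((ℓ:ℤ) ^ n)}) with hLdef
  have hmemL : ∀ x, x ∈ L ↔ ∀ i, ((ℓ:ℤ) ^ n) ∣ x i := by
    intro x
    simp [hLdef, Submodule.mem_pi, Ideal.mem_span_singleton]
  set N : Submodule ℤ (Fin d → ℤ) := K ⊔ L with hNdef
  -- the coordinatewise reduction map
  let π : (Fin d → ℤ) →+ (Fin d → ZMod (ℓ ^ n)) := AddMonoidHom.mk'
    (fun x i => ((x i : ℤ) : ZMod (ℓ ^ n))) (fun x y => by funext i; simp)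
  have hπapp : ∀ (x : Fin d → ℤ) (i : Fin d), π x i = ((x i : ℤ) : ZMod (ℓ ^ n)) :=
    fun x i => rfl
  have hπsurj : Function.Surjective π := by
    intro y
    exact ⟨fun i => (ZMod.cast (y i) : ℤ), funext fun i => ZMod.intCast_zmod_cast _⟩
  have hπmul : ∀ v : Fin d → ℤ, π (M.mulVec v)
      = (M.map (Int.cast : ℤ → ZMod (ℓ ^ n))).mulVec (π v) := by
    intro v; funext i
    exact RingHom.map_mulVec (Int.castRingHom (ZMod (ℓ ^ n))) M v i
  have hcomap : AddSubgroup.comap π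
      (LinearMap.range
        (Matrix.mulVecLin (M.map (Int.cast : ℤ → ZMod (ℓ ^ n))))).toAddSubgroup
      = N.toAddSubgroup := by
    ext x
    simp only [AddSubgroup.mem_comap, Submodule.mem_toAddSubgroup, LinearMap.mem_range,
      Matrix.mulVecLin_apply]
    constructor
    · rintro ⟨y, hy⟩
      set v : Fin d → ℤ := fun i => (ZMod.cast (y i) : ℤ) with hv
      have hπv : π v = y := funext fun i => ZMod.intCast_zmod_cast _
      have hsub : x - M.mulVec v ∈ L := by
        rw [hmemL]
        intro i
        have : ((x i - M.mulVec v i : ℤ) : ZMod (ℓ ^ n)) = 0 := by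
          push_cast
          have h1 : ((M.mulVec v i : ℤ) : ZMod (ℓ ^ n)) = π (M.mulVec v) i := rfl
          have h2 : ((x i : ℤ) : ZMod (ℓ ^ n)) = π x i := rfl
          rw [h1, h2, hπmul, hπv, hy]
          ring
        have := (ZMod.intCast_zmod_eq_zero_iff_dvd _ _).mp this
        simpa using this
      have : x = M.mulVec v + (x - M.mulVec v) := by ring
      rw [this]
      exact Submodule.add_mem_sup ⟨v, rfl⟩ hsub
    · intro hx
      obtain ⟨k, hk, l, hl, rfl⟩ := Submodule.mem_sup.mp hx
      obtain ⟨v, rfl⟩ := hk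
      refine ⟨π v, ?_⟩
      funext i
      have hl0 : ((l i : ℤ) : ZMod (ℓ ^ n)) = 0 := by
        rw [ZMod.intCast_zmod_eq_zero_iff_dvd]
        have := (hmemL l).mp hl i
        simpa using this
      have : π (M.mulVecLin v + l) i = π (M.mulVec v) i + ((l i : ℤ) : ZMod (ℓ ^ n)) := by
        simp [hπapp, Matrix.mulVecLin_apply]
      rw [this, hl0, hπmul, add_zero]
  have htrans : (LinearMap.range
        (Matrix.mulVecLin (M.map (Int.cast : ℤ → ZMod (ℓ ^ n))))).toAddSubgroup.index
      = N.toAddSubgroup.index := by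
    rw [← AddSubgroup.index_comap_of_surjective _ hπsurj, hcomap]
  -- index of L
  have hLidx : L.toAddSubgroup.index = (ℓ ^ n) ^ d := by
    have hLpi : L.toAddSubgroup = AddSubgroup.pi Set.univ
        (fun _ : Fin d => (Ideal.span {((ℓ:ℤ) ^ n)}).toAddSubgroup) := by
      ext x
      simp [hLdef, Submodule.mem_pi, AddSubgroup.mem_pi, Ideal.mem_span_singleton,
        Int.mem_zmultiples_iff]
    rw [hLpi, AddSubgroup.index_pi]
    simp [Ideal.span_singleton_toAddSubgroup_eq_zmultiples, Int.index_zmultiples,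
      Int.natAbs_pow]
  -- index of K
  have hKidx : K.toAddSubgroup.index = ℓ ^ c * t.natAbs := by
    rw [hKdef, aux_index M hdet0, ht, Int.natAbs_mul, Int.natAbs_pow]
    simp
  have hKne : K.toAddSubgroup.index ≠ 0 := by
    rw [hKidx]
    exact Nat.mul_ne_zero (pow_ne_zero _ hℓ.pos.ne') (Int.natAbs_ne_zero.mpr ht0)
  have hKleN : K.toAddSubgroup ≤ N.toAddSubgroup := fun x hx => (le_sup_left : K ≤ N) hx
  have hLleN : L.toAddSubgroup ≤ N.toAddSubgroup := fun x hx => (le_sup_right : L ≤ N) hx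
  have hrel := AddSubgroup.relIndex_mul_index hKleN
  rw [hKidx] at hrel
  have hNdvd : N.toAddSubgroup.index ∣ ℓ ^ (n * d) := by
    rw [pow_mul, ← hLidx]
    exact AddSubgroup.index_dvd_of_le hLleN
  obtain ⟨e, -, hNe⟩ := (Nat.dvd_prime_pow hℓ).mp hNdvd
  -- elements of N become elements of K after scaling by t
  have haux : ∀ w : Fin d → ℤ, M.det • w ∈ K := by
    intro w
    refine ⟨M.adjugate.mulVec w, ?_⟩
    rw [Matrix.mulVecLin_apply, Matrix.mulVec_mulVec, Matrix.mul_adjugate,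
      Matrix.smul_mulVec, Matrix.one_mulVec]
  have hsmulK : ∀ y ∈ N, t • y ∈ K := by
    intro y hy
    obtain ⟨k, hk, l, hl, rfl⟩ := Submodule.mem_sup.mp hy
    rw [smul_add]
    refine K.add_mem (K.smul_mem t hk) ?_
    set w : Fin d → ℤ := fun i => l i / (ℓ:ℤ) ^ n with hw
    have hlw : l = ((ℓ:ℤ) ^ n) • w := by
      funext i
      exact (Int.mul_ediv_cancel' ((hmemL l).mp hl i)).symm
    have harith : t * (ℓ:ℤ) ^ n = M.det * (ℓ:ℤ) ^ (n - c) := by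
      have hpow : (ℓ:ℤ) ^ c * (ℓ:ℤ) ^ (n - c) = (ℓ:ℤ) ^ n := by
        rw [← pow_add, Nat.add_sub_cancel' hcn]
      rw [ht, ← hpow]
      ring
    rw [hlw, smul_smul, harith, mul_smul]
    exact haux _
  -- ℓ does not divide the relindex
  have hrne : K.toAddSubgroup.relIndex N.toAddSubgroup ≠ 0 := by
    intro h0
    rw [hKidx] at hKne
    rw [h0, zero_mul] at hrel
    exact hKne hrel.symm
  have hrdvd : ¬ ℓ ∣ K.toAddSubgroup.relIndex N.toAddSubgroup := by
    intro hdvd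
    have hfin : Finite (N.toAddSubgroup ⧸ K.toAddSubgroup.addSubgroupOf N.toAddSubgroup) :=
      Nat.finite_of_card_ne_zero hrne
    haveI := Fintype.ofFinite (N.toAddSubgroup ⧸ K.toAddSubgroup.addSubgroupOf N.toAddSubgroup)
    haveI : Fact ℓ.Prime := ⟨hℓ⟩
    have hcard : ℓ ∣ Fintype.card
        (N.toAddSubgroup ⧸ K.toAddSubgroup.addSubgroupOf N.toAddSubgroup) := by
      rw [← Nat.card_eq_fintype_card]
      exact hdvd
    obtain ⟨x, hx⟩ := exists_prime_addOrderOf_dvd_card ℓ hcard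
    obtain ⟨y, rfl⟩ := QuotientAddGroup.mk'_surjective _ x
    have hty : t • QuotientAddGroup.mk' (K.toAddSubgroup.addSubgroupOf N.toAddSubgroup) y
        = 0 := by
      rw [← map_zsmul]
      rw [QuotientAddGroup.mk'_apply, QuotientAddGroup.eq_zero_iff]
      rw [AddSubgroup.mem_addSubgroupOf]
      have : ((t • y : N.toAddSubgroup) : Fin d → ℤ) = t • (y : Fin d → ℤ) := rfl
      rw [this]
      exact hsmulK _ y.2
    have h2 := addOrderOf_dvd_iff_zsmul_eq_zero.mpr hty
    rw [hx] at h2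
    exact hℓt h2
  have hudvd : ¬ ℓ ∣ t.natAbs := fun h => hℓt (Int.natCast_dvd.mpr h)
  -- final arithmetic
  rw [htrans, hNe]
  rw [hNe] at hrel
  set r := K.toAddSubgroup.relIndex N.toAddSubgroup with hr
  have hle1 : e ≤ c := by
    have h1 : ℓ ^ e ∣ ℓ ^ c * t.natAbs := by
      rw [← hrel]
      exact dvd_mul_left _ _
    have h2 : Nat.Coprime (ℓ ^ e) t.natAbs :=
      ((Nat.Prime.coprime_iff_not_dvd hℓ).mpr hudvd).pow_left e
    have h3 : ℓ ^ e ∣ ℓ ^ c := h2.dvd_of_dvd_mul_right h1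
    exact (Nat.pow_dvd_pow_iff_le_right hℓ1).mp h3
  have hle2 : c ≤ e := by
    have h1 : ℓ ^ c ∣ r * ℓ ^ e := by
      rw [hrel]
      exact dvd_mul_right _ _
    have h2 : Nat.Coprime (ℓ ^ c) r :=
      ((Nat.Prime.coprime_iff_not_dvd hℓ).mpr hrdvd).pow_left c
    have h3 : ℓ ^ c ∣ ℓ ^ e := h2.dvd_of_dvd_mul_left h1
    exact (Nat.pow_dvd_pow_iff_le_right hℓ1).mp h3
  rw [le_antisymm hle1 hle2]
end

section
/- Let ℓ be a prime, n and d positive integers, and M a d×d integer matrix with det M ≡ 0 (mod ℓ^n). Then the image of the induced endomorphism of (ℤ/ℓ^nℤ)^d has cardinality at most ℓ^{nd − n}, i.e., its index is at least ℓ^n. -/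
private lemma aux_ker_card (ℓ : ℕ) (hℓ : ℓ.Prime) :
    ∀ (n : ℕ) (Q : Type) [AddCommGroup Q] [Finite Q],
      ℓ ^ min n ((Nat.card Q).factorization ℓ) ≤
        Nat.card (AddMonoidHom.ker (zsmulAddGroupHom ((ℓ : ℤ) ^ n) : Q →+ Q)) := by
  intro n
  induction n with
  | zero =>
    intro Q _ _
    simpa using Nat.card_pos (α := (AddMonoidHom.ker (zsmulAddGroupHom ((ℓ : ℤ) ^ 0) : Q →+ Q)))
  | succ n IH =>
    intro Q _ _
    by_cases hdvd : ℓ ∣ Nat.card Q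
    · -- setup
      set h : Q →+ Q := zsmulAddGroupHom (ℓ : ℤ) with hh
      set T := h.ker with hTdef
      -- elements of T are killed by ℓ (as nsmul)
      have hTkill : ∀ x : Q, x ∈ T → ℓ • x = 0 := by
        intro x hx
        rw [hTdef, AddMonoidHom.mem_ker, hh, zsmulAddGroupHom_apply] at hx
        rw [← natCast_zsmul]
        exact hx
      haveI : Fact ℓ.Prime := ⟨hℓ⟩
      haveI : Fintype Q := Fintype.ofFinite Q
      obtain ⟨x, hx⟩ := exists_prime_addOrderOf_dvd_card (G := Q) ℓ
        (by rwa [← Nat.card_eq_fintype_card])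
      have hxT : x ∈ T := by
        rw [hTdef, AddMonoidHom.mem_ker, hh, zsmulAddGroupHom_apply, natCast_zsmul, ← hx]
        exact addOrderOf_nsmul_eq_zero x
      have hldvdT : ℓ ∣ Nat.card T := by
        have h1 : addOrderOf (⟨x, hxT⟩ : T) = ℓ := by
          rw [← hx]
          exact (addOrderOf_injective T.subtype Subtype.coe_injective ⟨x, hxT⟩).symm ▸ rfl
        rw [← h1]
        exact addOrderOf_dvd_natCard _
      -- card T is a power of ℓ
      have hTcard0 : Nat.card T ≠ 0 := Nat.card_pos.ne'
      obtain ⟨k, hk⟩ : ∃ k, Nat.card T = ℓ ^ k := by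
        refine ⟨(Nat.card T).primeFactorsList.length, ?_⟩
        refine Nat.eq_prime_pow_of_unique_prime_dvd hTcard0 ?_
        intro q hq hqd
        haveI : Fact q.Prime := ⟨hq⟩
        haveI : Fintype T := Fintype.ofFinite _
        obtain ⟨t, ht⟩ := exists_prime_addOrderOf_dvd_card (G := T) q
          (by rwa [← Nat.card_eq_fintype_card])
        have hq1 : q ∣ ℓ := by
          rw [← ht]
          refine addOrderOf_dvd_iff_nsmul_eq_zero.mpr ?_
          have h2 : ℓ • (t : Q) = 0 := hTkill _ t.2
          ext
          simpa using h2
        exact ((Nat.prime_dvd_prime_iff_eq hq hℓ).mp hq1)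
      have hk1 : 1 ≤ k := by
        by_contra hc
        push_neg at hc
        interval_cases k
        · rw [pow_zero] at hk
          rw [hk] at hldvdT
          exact hℓ.one_lt.ne' (Nat.dvd_one.mp hldvdT)
      -- Q' := range of h
      set Q' := h.range with hQ'def
      -- card Q = card Q' * ℓ ^ k
      have hcardQ : Nat.card Q = Nat.card Q' * ℓ ^ k := by
        rw [AddSubgroup.card_eq_card_quotient_mul_card_addSubgroup T, ← hk]
        congr 1
        exact Nat.card_congr (QuotientAddGroup.quotientKerEquivRange h).toEquiv
      have hQ0 : Nat.card Q ≠ 0 := Nat.card_pos.ne'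
      have hQ'0 : Nat.card Q' ≠ 0 := Nat.card_pos.ne'
      -- factorization relation
      have hfact : (Nat.card Q).factorization ℓ = (Nat.card Q').factorization ℓ + k := by
        rw [hcardQ, Nat.factorization_mul hQ'0 (pow_ne_zero _ hℓ.pos.ne')]
        simp [hℓ.factorization_pow]
      -- the two kernels
      set K := AddMonoidHom.ker (zsmulAddGroupHom ((ℓ : ℤ) ^ (n+1)) : Q →+ Q) with hKdef
      set K' := AddMonoidHom.ker (zsmulAddGroupHom ((ℓ : ℤ) ^ n) : Q' →+ Q') with hK'def
      -- the homomorphism φ : K →+ K'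
      have hmemK : ∀ x : Q, x ∈ K ↔ ((ℓ : ℤ) ^ (n+1)) • x = 0 := by
        intro x
        rw [hKdef, AddMonoidHom.mem_ker, zsmulAddGroupHom_apply]
      have hmemK' : ∀ y : Q', y ∈ K' ↔ ((ℓ : ℤ) ^ n) • y = 0 := by
        intro y
        rw [hK'def, AddMonoidHom.mem_ker, zsmulAddGroupHom_apply]
      have key : ∀ x : Q, x ∈ K → ((ℓ : ℤ) ^ n) • ((ℓ : ℤ) • x) = 0 := by
        intro x hx
        rw [smul_smul, ← pow_succ]
        exact (hmemK x).mp hx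
      let φ : K →+ K' := AddMonoidHom.mk'
        (fun x => ⟨⟨(ℓ : ℤ) • (x : Q), ⟨(x : Q), by simp [hh]⟩⟩, by
          rw [hmemK']
          ext
          push_cast [AddSubgroup.coe_zsmul]
          exact key _ x.2⟩)
        (by
          intro a b
          ext
          push_cast [AddSubgroup.coe_zsmul]
          rw [smul_add])
      have hφsurj : Function.Surjective φ := by
        rintro ⟨⟨y, ⟨x, hx⟩⟩, hy⟩
        have hxy : (ℓ : ℤ) • x = y := by simpa [hh] using hx
        have hxK : x ∈ K := by
          rw [hmemK, pow_succ, mul_smul, hxy]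
          have := (hmemK' _).mp hy
          have h3 := congrArg (Subtype.val) this
          simpa [AddSubgroup.coe_zsmul] using h3
        refine ⟨⟨x, hxK⟩, ?_⟩
        ext
        simp only [φ, AddMonoidHom.mk'_apply]
        exact hxy
      -- kernel of φ has the same cardinality as T
      have hkerφ : Nat.card (AddMonoidHom.ker φ) = Nat.card T := by
        refine Nat.card_congr ⟨fun x => ⟨(x : K), ?_⟩, fun t => ⟨⟨(t : Q), ?_⟩, ?_⟩, ?_, ?_⟩
        · have hx := x.2
          rw [AddMonoidHom.mem_ker] at hx
          have := congrArg (fun z => ((z : K').val : Q)) hx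
          simp only [φ, AddMonoidHom.mk'_apply] at this
          rw [hTdef, AddMonoidHom.mem_ker, hh, zsmulAddGroupHom_apply]
          simpa using this
        · rw [hmemK, pow_succ, mul_smul]
          have h2 : (ℓ : ℤ) • (t : Q) = 0 := by
            rw [natCast_zsmul]
            exact hTkill _ t.2
          rw [h2, smul_zero]
        · rw [AddMonoidHom.mem_ker]
          ext
          simp only [φ, AddMonoidHom.mk'_apply]
          have h2 : (ℓ : ℤ) • (t : Q) = 0 := by
            rw [natCast_zsmul]
            exact hTkill _ t.2
          simpa using h2
        · intro x; rfl
        · intro t; rfl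
      -- card K = card K' * card T
      have hcardK : Nat.card K = Nat.card K' * ℓ ^ k := by
        rw [AddSubgroup.card_eq_card_quotient_mul_card_addSubgroup (AddMonoidHom.ker φ),
          hkerφ, ← hk]
        congr 1
        exact Nat.card_congr (QuotientAddGroup.quotientKerEquivOfSurjective φ hφsurj).toEquiv
      -- apply IH
      have hIH := IH Q'
      have harith : min (n+1) ((Nat.card Q).factorization ℓ)
          ≤ min n ((Nat.card Q').factorization ℓ) + k := by
        rw [hfact]; omega
      calc ℓ ^ min (n+1) ((Nat.card Q).factorization ℓ)
          ≤ ℓ ^ (min n ((Nat.card Q').factorization ℓ) + k) :=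
            Nat.pow_le_pow_right hℓ.pos harith
        _ = ℓ ^ min n ((Nat.card Q').factorization ℓ) * ℓ ^ k := pow_add _ _ _
        _ ≤ Nat.card K' * ℓ ^ k := Nat.mul_le_mul_right _ hIH
        _ = Nat.card K := hcardK.symm
    · have h0 : (Nat.card Q).factorization ℓ = 0 := Nat.factorization_eq_zero_of_not_dvd hdvd
      have hmin : min (n+1) ((Nat.card Q).factorization ℓ) = 0 := by omega
      rw [hmin, pow_zero]
      exact Nat.card_pos (α := _)

private lemma aux_perturb {d : ℕ} (M : Matrix (Fin d) (Fin d) ℤ) (m : ℕ) (hm : m ≠ 0) :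
    ∃ c : ℤ, (m : ℤ) ∣ c ∧ (M + c • (1 : Matrix (Fin d) (Fin d) ℤ)).det ≠ 0 := by
  classical
  set q := Matrix.charpoly (-M) with hq
  have hqne : q ≠ 0 := (Matrix.charpoly_monic (-M)).ne_zero
  have heval : ∀ c : ℤ, q.eval c = (M + c • (1 : Matrix (Fin d) (Fin d) ℤ)).det := by
    intro c
    rw [hq, Matrix.charpoly]
    have h1 : (Polynomial.evalRingHom c) (Matrix.charmatrix (-M)).det
        = ((Polynomial.evalRingHom c).mapMatrix (Matrix.charmatrix (-M))).det :=
      RingHom.map_det _ _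
    have h2 : ((Polynomial.evalRingHom c).mapMatrix (Matrix.charmatrix (-M)))
        = M + c • (1 : Matrix (Fin d) (Fin d) ℤ) := by
      ext i j
      by_cases hij : i = j
      · subst hij
        simp [Matrix.charmatrix_apply_eq, Matrix.add_apply, Matrix.smul_apply, smul_eq_mul,
          Matrix.one_apply_eq, add_comm, ← Matrix.diagonal_intCast (n := Fin d) c,
          Matrix.diagonal_apply_eq]
      · simp [Matrix.charmatrix_apply_ne _ _ _ hij, Matrix.add_apply, Matrix.smul_apply,
          Matrix.one_apply_ne hij, smul_eq_mul, ← Matrix.diagonal_intCast (n := Fin d) c,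
          Matrix.diagonal_apply_ne _ hij]
    simpa [h2] using h1
  have hfin := Polynomial.finite_setOf_isRoot hqne
  have hinj : Function.Injective (fun t : ℤ => (m : ℤ) * t) :=
    mul_right_injective₀ (Int.natCast_ne_zero.mpr hm)
  have hsinf := Set.infinite_range_of_injective hinj
  obtain ⟨c, hcr, hcroot⟩ := (hsinf.diff hfin).nonempty
  obtain ⟨t, ht⟩ := hcr
  refine ⟨c, ⟨t, ht.symm⟩, ?_⟩
  rw [← heval c]
  exact fun h => hcroot h

private lemma aux_index_range {d : ℕ} (A : Matrix (Fin d) (Fin d) ℤ) (hA : A.det ≠ 0) :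
    (LinearMap.range A.mulVecLin).toAddSubgroup.index = A.det.natAbs := by
  classical
  set N := LinearMap.range A.mulVecLin with hN
  have hinj : Function.Injective A.mulVecLin := by
    intro x y hxy
    by_contra hne
    have h1 : A.mulVec (x - y) = 0 := by
      have : A.mulVecLin (x - y) = 0 := by rw [map_sub, hxy, sub_self]
      simpa using this
    exact hA (Matrix.exists_mulVec_eq_zero_iff.mp ⟨x - y, sub_ne_zero.mpr hne, h1⟩)
  obtain ⟨m, snf⟩ := N.smithNormalForm (Pi.basisFun ℤ (Fin d))
  -- m = d
  have hmd : m = d := by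
    have e : (Fin d → ℤ) ≃ₗ[ℤ] N := LinearEquiv.ofInjective _ hinj
    have b2 : Module.Basis (Fin m) ℤ (Fin d → ℤ) := snf.bN.map e.symm
    have h1 := Module.finrank_eq_card_basis b2
    rw [Module.finrank_fin_fun, Fintype.card_fin] at h1
    exact h1.symm
  subst hmd
  obtain ⟨bM, bN, f, a, hsnf⟩ := snf
  -- index formula
  rw [Module.Basis.SmithNormalForm.toAddSubgroup_index_eq_pow_mul_prod ⟨bM, bN, f, a, hsnf⟩]
  simp only [Fintype.card_fin, Nat.sub_self, pow_zero, one_mul]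
  simp only [Ideal.span_singleton_toAddSubgroup_eq_zmultiples, Int.index_zmultiples]
  -- now : ∏ i, (a i).natAbs = A.det.natAbs
  set fe : Fin m ≃ Fin m := Equiv.ofBijective f (Finite.injective_iff_bijective.mp f.injective)
    with hfedef
  have hfe : ∀ i, fe i = f i := fun i => rfl
  set e : (Fin m → ℤ) ≃ₗ[ℤ] N := LinearEquiv.ofInjective _ hinj with he
  set e₂ : (Fin m → ℤ) ≃ₗ[ℤ] N := (Pi.basisFun ℤ (Fin m)).equiv bN (Equiv.refl _) with he₂
  have hassoc : Associated (LinearMap.det (N.subtype ∘ₗ (e : (Fin m → ℤ) →ₗ[ℤ] N)))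
      (LinearMap.det (N.subtype ∘ₗ (e₂ : (Fin m → ℤ) →ₗ[ℤ] N))) :=
    LinearMap.associated_det_comp_equiv _ _ _
  have hdet1 : LinearMap.det (N.subtype ∘ₗ (e : (Fin m → ℤ) →ₗ[ℤ] N)) = A.det := by
    have : N.subtype ∘ₗ (e : (Fin m → ℤ) →ₗ[ℤ] N) = Matrix.toLin' A := by
      apply LinearMap.ext
      intro v
      show ((LinearEquiv.ofInjective A.mulVecLin hinj) v : Fin m → ℤ) = Matrix.toLin' A v
      rw [LinearEquiv.ofInjective_apply, Matrix.toLin'_apply, Matrix.mulVecLin_apply]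
    rw [this, LinearMap.det_toLin']
  -- compute det of the second map
  set B : Matrix (Fin m) (Fin m) ℤ := (Pi.basisFun ℤ (Fin m)).toMatrix (⇑bM ∘ ⇑fe) with hB
  have hBunit : IsUnit B.det := by
    have : B = (Pi.basisFun ℤ (Fin m)).toMatrix ⇑(bM.reindex fe.symm) := by
      rw [Module.Basis.coe_reindex]
      simp [hB]
    rw [this]
    exact (Pi.basisFun ℤ (Fin m)).isUnit_det _
  have hdet2 : LinearMap.det (N.subtype ∘ₗ (e₂ : (Fin m → ℤ) →ₗ[ℤ] N))
      = B.det * ∏ i, a i := by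
    rw [← LinearMap.det_toMatrix (Pi.basisFun ℤ (Fin m))]
    have hmat : (LinearMap.toMatrix (Pi.basisFun ℤ (Fin m)) (Pi.basisFun ℤ (Fin m)))
        (N.subtype ∘ₗ (e₂ : (Fin m → ℤ) →ₗ[ℤ] N)) = B * Matrix.diagonal a := by
      ext i j
      rw [LinearMap.toMatrix_apply, Matrix.mul_diagonal]
      simp only [LinearMap.coe_comp, Function.comp_apply, LinearEquiv.coe_coe]
      rw [he₂]
      have : ((Pi.basisFun ℤ (Fin m)).equiv bN (Equiv.refl _)) ((Pi.basisFun ℤ (Fin m)) j)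
          = bN j := by rw [Module.Basis.equiv_apply]; rfl
      rw [this]
      have h2 : (N.subtype (bN j) : Fin m → ℤ) = a j • bM (f j) := hsnf j
      rw [h2]
      simp [hB, Module.Basis.toMatrix_apply, mul_comm, hfe]
    rw [hmat, Matrix.det_mul, Matrix.det_diagonal]
  -- conclude
  have h3 : A.det.natAbs = (B.det * ∏ i, a i).natAbs := by
    rw [← hdet1, ← hdet2]
    exact Int.natAbs_eq_iff_associated.mpr hassoc
  rw [h3, Int.natAbs_mul]
  have h4 : B.det.natAbs = 1 := by
    rcases Int.isUnit_iff.mp hBunit with h | h <;> simp [h]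
  rw [h4, one_mul]
  exact (map_prod Int.natAbsHom a Finset.univ).symm

theorem stmt_9 (ℓ : ℕ) (hℓ : ℓ.Prime) (n d : ℕ) (hn : 0 < n) (hd : 0 < d)
    (M : Matrix (Fin d) (Fin d) ℤ)
    (hdet : (ℓ : ℤ) ^ n ∣ M.det) :
    Nat.card (LinearMap.range
        (Matrix.mulVecLin (M.map (Int.cast : ℤ → ZMod (ℓ ^ n))))) ≤ ℓ ^ (n * d - n) ∧
    ℓ ^ n ≤ (LinearMap.range
        (Matrix.mulVecLin (M.map (Int.cast : ℤ → ZMod (ℓ ^ n))))).toAddSubgroup.index := by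
  classical
  haveI : Fact ℓ.Prime := ⟨hℓ⟩
  have hℓn0 : (ℓ ^ n : ℕ) ≠ 0 := pow_ne_zero _ hℓ.pos.ne'
  haveI : NeZero (ℓ ^ n) := ⟨hℓn0⟩
  obtain ⟨c, hcdvd, hcdet⟩ := aux_perturb M (ℓ ^ n) hℓn0
  set M' : Matrix (Fin d) (Fin d) ℤ := M + c • (1 : Matrix (Fin d) (Fin d) ℤ) with hM'
  have hc0 : ((c : ℤ) : ZMod (ℓ ^ n)) = 0 := (ZMod.intCast_zmod_eq_zero_iff_dvd c (ℓ^n)).mpr hcdvd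
  have hmap : M'.map (Int.cast : ℤ → ZMod (ℓ ^ n)) = M.map (Int.cast : ℤ → ZMod (ℓ ^ n)) := by
    ext i j
    simp only [hM', Matrix.map_apply, Matrix.add_apply, Matrix.smul_apply, smul_eq_mul,
      Int.cast_add, Int.cast_mul, hc0, zero_mul, add_zero]
  have hcast : ((M'.det : ℤ) : ZMod (ℓ ^ n)) = ((M.det : ℤ) : ZMod (ℓ ^ n)) := by
    have h1 := RingHom.map_det (Int.castRingHom (ZMod (ℓ ^ n))) M'
    have h2 := RingHom.map_det (Int.castRingHom (ZMod (ℓ ^ n))) M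
    rw [RingHom.mapMatrix_apply] at h1 h2
    have h3 : M'.map ⇑(Int.castRingHom (ZMod (ℓ ^ n))) = M.map ⇑(Int.castRingHom (ZMod (ℓ ^ n))) := hmap
    rw [show ((M'.det : ℤ) : ZMod (ℓ ^ n)) = (Int.castRingHom (ZMod (ℓ ^ n))) M'.det from rfl,
      show ((M.det : ℤ) : ZMod (ℓ ^ n)) = (Int.castRingHom (ZMod (ℓ ^ n))) M.det from rfl, h1, h2, h3]
  have hMdet0 : ((M.det : ℤ) : ZMod (ℓ ^ n)) = 0 := by
    rw [ZMod.intCast_zmod_eq_zero_iff_dvd]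
    push_cast
    exact hdet
  have hdet' : ((ℓ : ℤ)) ^ n ∣ M'.det := by
    have h4 := hcast.trans hMdet0
    rw [ZMod.intCast_zmod_eq_zero_iff_dvd] at h4
    push_cast at h4
    exact h4
  -- the lattice A and its index
  set A : Submodule ℤ (Fin d → ℤ) := LinearMap.range M'.mulVecLin with hA
  have hidx : A.toAddSubgroup.index = M'.det.natAbs := aux_index_range M' hcdet
  -- the reduction homomorphism
  set π : (Fin d → ℤ) →+ (Fin d → ZMod (ℓ ^ n)) := AddMonoidHom.mk' (fun x i => ((x i : ℤ) : ZMod (ℓ ^ n)))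
    (by intro a b; funext i; simp [Pi.add_apply]) with hπ
  have hπs : Function.Surjective π := by
    intro v
    refine ⟨fun i => (ZMod.intCast_surjective (v i)).choose, ?_⟩
    funext i
    exact (ZMod.intCast_surjective (v i)).choose_spec
  have hcomm : ∀ x : Fin d → ℤ, π (M'.mulVec x) = (M.map (Int.cast : ℤ → ZMod (ℓ ^ n))).mulVec (π x) := by
    intro x
    rw [← hmap]
    funext i
    simp only [hπ, AddMonoidHom.mk'_apply, Matrix.mulVec, dotProduct, Matrix.map_apply]
    push_cast
    rfl
  set B : AddSubgroup (Fin d → ℤ) :=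
    (zsmulAddGroupHom ((ℓ : ℤ) ^ n) : (Fin d → ℤ) →+ (Fin d → ℤ)).range with hB
  have hBmem : ∀ z : Fin d → ℤ, π z = 0 ↔ z ∈ B := by
    intro z
    constructor
    · intro hz
      have hdv : ∀ i, ((ℓ : ℤ)) ^ n ∣ z i := by
        intro i
        have h5 : ((z i : ℤ) : ZMod (ℓ ^ n)) = 0 := congrFun hz i
        rw [ZMod.intCast_zmod_eq_zero_iff_dvd] at h5
        push_cast at h5
        exact h5
      refine ⟨fun i => (hdv i).choose, ?_⟩
      rw [zsmulAddGroupHom_apply]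
      funext i
      have := (hdv i).choose_spec
      simp only [Pi.smul_apply, smul_eq_mul]
      exact this.symm
    · rintro ⟨y, rfl⟩
      rw [zsmulAddGroupHom_apply]
      funext i
      simp only [hπ, AddMonoidHom.mk'_apply, Pi.smul_apply, smul_eq_mul, Int.cast_mul]
      have h6 : (((ℓ : ℤ) ^ n : ℤ) : ZMod (ℓ ^ n)) = 0 := by
        rw [ZMod.intCast_zmod_eq_zero_iff_dvd]
        push_cast
        rfl
      rw [h6, zero_mul]
      rfl
  set S : Submodule (ZMod (ℓ ^ n)) (Fin d → ZMod (ℓ ^ n)) :=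
    LinearMap.range (Matrix.mulVecLin (M.map (Int.cast : ℤ → ZMod (ℓ ^ n)))) with hS
  have hcomap : AddSubgroup.comap π S.toAddSubgroup = A.toAddSubgroup ⊔ B := by
    apply le_antisymm
    · intro x hx
      rw [AddSubgroup.mem_comap, Submodule.mem_toAddSubgroup, hS, LinearMap.mem_range] at hx
      obtain ⟨v, hv⟩ := hx
      obtain ⟨u, hu⟩ := hπs v
      have h7 : π (x - M'.mulVec u) ∈ ({0} : Set (Fin d → ZMod (ℓ ^ n))) := by
        rw [map_sub, hcomm, hu, ← Matrix.mulVecLin_apply, hv]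
        simp
      have h8 : x - M'.mulVec u ∈ B := (hBmem _).mp (by simpa using h7)
      have h9 : M'.mulVec u ∈ A.toAddSubgroup := by
        rw [Submodule.mem_toAddSubgroup, hA, LinearMap.mem_range]
        exact ⟨u, rfl⟩
      have := add_mem (AddSubgroup.mem_sup_left h9) (AddSubgroup.mem_sup_right h8)
      simpa using this
    · rw [sup_le_iff]
      constructor
      · rintro x hx
        rw [Submodule.mem_toAddSubgroup, hA, LinearMap.mem_range] at hx
        obtain ⟨u, rfl⟩ := hx
        rw [AddSubgroup.mem_comap, Submodule.mem_toAddSubgroup, hS, LinearMap.mem_range]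
        refine ⟨π u, ?_⟩
        rw [Matrix.mulVecLin_apply, ← hcomm]
        rfl
      · intro z hz
        rw [AddSubgroup.mem_comap, Submodule.mem_toAddSubgroup]
        rw [← hBmem z] at hz
        rw [hz]
        exact zero_mem _
  have hidx2 : S.toAddSubgroup.index = (A.toAddSubgroup ⊔ B).index := by
    rw [← AddSubgroup.index_comap_of_surjective S.toAddSubgroup hπs, hcomap]
  -- quotient group Q
  set AG := A.toAddSubgroup with hAG
  set Q := (Fin d → ℤ) ⧸ AG with hQ
  have hQcard : Nat.card Q = M'.det.natAbs := hidx
  have hQfin : Finite Q :=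
    Nat.finite_of_card_ne_zero (by rw [hQcard]; exact Int.natAbs_ne_zero.mpr hcdet)
  set σ : Q →+ Q := zsmulAddGroupHom ((ℓ : ℤ) ^ n) with hσ
  have e1 := QuotientAddGroup.quotientQuotientEquivQuotient AG (AG ⊔ B) le_sup_left
  have hmapmk : AddSubgroup.map (QuotientAddGroup.mk' AG) (AG ⊔ B) = σ.range := by
    rw [AddSubgroup.map_sup, QuotientAddGroup.map_mk'_self, bot_sup_eq]
    ext q
    constructor
    · rintro ⟨x, hxB, rfl⟩
      obtain ⟨y, rfl⟩ := hxB
      refine ⟨QuotientAddGroup.mk' AG y, ?_⟩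
      rw [hσ, zsmulAddGroupHom_apply, zsmulAddGroupHom_apply, map_zsmul]
    · rintro ⟨p, rfl⟩
      obtain ⟨y, rfl⟩ := QuotientAddGroup.mk'_surjective AG p
      refine ⟨(ℓ : ℤ) ^ n • y, ⟨y, rfl⟩, ?_⟩
      rw [hσ, zsmulAddGroupHom_apply, map_zsmul]
  have h5 : (AG ⊔ B).index = σ.range.index := by
    show Nat.card ((Fin d → ℤ) ⧸ (AG ⊔ B)) = Nat.card (Q ⧸ σ.range)
    rw [← hmapmk]
    exact (Nat.card_congr e1.toEquiv).symm
  have h6 : σ.range.index = Nat.card σ.ker := by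
    have h7 := AddSubgroup.index_mul_card σ.range
    have h8 : Nat.card Q = Nat.card σ.range * Nat.card σ.ker := by
      rw [AddSubgroup.card_eq_card_quotient_mul_card_addSubgroup σ.ker]
      congr 1
      exact Nat.card_congr (QuotientAddGroup.quotientKerEquivRange σ).toEquiv
    have hr0 : Nat.card σ.range ≠ 0 := Nat.card_pos.ne'
    have h9 : σ.range.index * Nat.card σ.range = Nat.card σ.ker * Nat.card σ.range := by
      rw [h7, h8, mul_comm]
    exact Nat.eq_of_mul_eq_mul_right (Nat.pos_of_ne_zero hr0) h9
  have hv : n ≤ (Nat.card Q).factorization ℓ := by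
    rw [hQcard]
    refine (hℓ.pow_dvd_iff_le_factorization (Int.natAbs_ne_zero.mpr hcdet)).mp ?_
    have := Int.natAbs_dvd_natAbs.mpr hdet'
    simpa [Int.natAbs_pow] using this
  have hker := aux_ker_card ℓ hℓ n Q
  rw [min_eq_left hv] at hker
  have hfinal2 : ℓ ^ n ≤ S.toAddSubgroup.index := by
    rw [hidx2, h5, h6]
    exact hker
  refine ⟨?_, hfinal2⟩
  -- first conjunct
  have hcardspace : Nat.card (Fin d → ZMod (ℓ ^ n)) = ℓ ^ (n * d) := by
    rw [Nat.card_pi]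
    simp [Nat.card_zmod, Finset.prod_const, pow_mul]
  have hsplit := AddSubgroup.index_mul_card S.toAddSubgroup
  rw [hcardspace] at hsplit
  have hcards : Nat.card S = Nat.card S.toAddSubgroup := rfl
  have hnnd : n ≤ n * d := Nat.le_mul_of_pos_right n hd
  have hsub : ℓ ^ (n * d - n) * ℓ ^ n = ℓ ^ (n * d) := by
    rw [← pow_add]
    congr 1
    omega
  have hle : Nat.card S * ℓ ^ n ≤ ℓ ^ (n * d - n) * ℓ ^ n := by
    calc Nat.card S * ℓ ^ n ≤ Nat.card S * S.toAddSubgroup.index :=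
          Nat.mul_le_mul_left _ hfinal2
      _ = ℓ ^ (n * d) := by rw [hcards, mul_comm, hsplit]
      _ = ℓ ^ (n * d - n) * ℓ ^ n := hsub.symm
  exact Nat.le_of_mul_le_mul_right hle (pow_pos hℓ.pos n)
end

section
/- Let r be a rational number with r > 1, and let ℓ be a prime. Then there exist infinitely many primes p (not dividing the numerator or denominator of r) such that the multiplicative order of r modulo p is coprime to ℓ. -/
lemma exists_good (a b : ℕ) (hb : 0 < b) (hba : b < a) (hcop : Nat.Coprime a b)
    (ℓ : ℕ) (hℓ : ℓ.Prime) (F : Finset ℕ) :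
    ∃ p : ℕ, p ∉ F ∧ p.Prime ∧ ¬ p ∣ a ∧ ¬ p ∣ b ∧
      Nat.Coprime (orderOf ((a : ZMod p) * (b : ZMod p)⁻¹)) ℓ := by
  have ha2 : 2 ≤ a := by omega
  obtain ⟨q, hqge, hq⟩ := Nat.exists_infinite_primes (F.sup id + ℓ + a + 2)
  have hqℓ : ℓ < q := by omega
  have hq0 : 0 < q := hq.pos
  have hq1 : 1 ≤ q - 1 := by omega
  set c := a - b with hc
  have hc0 : 0 < c := by omega
  set S := ∑ i ∈ Finset.range q, a ^ i * b ^ (q - 1 - i) with hS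
  set D := a ^ q - b ^ q with hD
  have hbq : b ^ q ≤ a ^ q := Nat.pow_le_pow_left hba.le q
  have hDS : D = c * S := by
    have : ((D : ℤ)) = (c : ℤ) * (S : ℤ) := by
      push_cast [hD, hS, hc, Nat.cast_sub hbq, Nat.cast_sub hba.le]
      rw [mul_comm]
      exact (geom_sum₂_mul (a : ℤ) (b : ℤ) q).symm
    exact_mod_cast this
  have hSge : a ^ (q - 1) ≤ S := by
    have hmem : q - 1 ∈ Finset.range q := Finset.mem_range.mpr (by omega)
    calc a ^ (q-1) = a ^ (q-1) * b ^ (q - 1 - (q-1)) := by simp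
    _ ≤ S := Finset.single_le_sum (f := fun i => a ^ i * b ^ (q - 1 - i)) (fun i _ => Nat.zero_le _) hmem
  have hS1 : 1 < S := lt_of_lt_of_le (by calc 1 < a := by omega
        _ ≤ a ^ (q-1) := Nat.le_self_pow (by omega) a) hSge
  have hD0 : 0 < D := by
    rw [hDS]; exact Nat.mul_pos hc0 (by omega)
  by_contra hcon
  push_neg at hcon
  -- every prime factor p of D has D.factorization p ≤ c.factorization p
  have key : ∀ p : ℕ, D.factorization p ≤ c.factorization p := by
    intro p
    by_cases hp : p.Prime
    · by_cases hpD : p ∣ D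
      · have : Fact p.Prime := ⟨hp⟩
        have hpa : ¬ p ∣ a := by
          intro hpa
          have h1 : p ∣ a ^ q := dvd_pow hpa hq0.ne'
          have h2 : p ∣ b ^ q := by
            have : a ^ q - D = b ^ q := by omega
            exact this ▸ Nat.dvd_sub h1 hpD
          exact hp.one_lt.ne' (Nat.eq_one_of_dvd_coprimes hcop hpa (hp.dvd_of_dvd_pow h2))
        have hpb : ¬ p ∣ b := by
          intro hpb
          have h2 : p ∣ a ^ q := by
            have : D + b ^ q = a ^ q := by omega
            exact this ▸ Nat.dvd_add hpD (dvd_pow hpb hq0.ne')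
          exact hpa (hp.dvd_of_dvd_pow h2)
        have hbne : (b : ZMod p) ≠ 0 := by
          simpa [ZMod.natCast_eq_zero_iff] using hpb
        have hane : (a : ZMod p) ≠ 0 := by
          simpa [ZMod.natCast_eq_zero_iff] using hpa
        set x : ZMod p := (a : ZMod p) * (b : ZMod p)⁻¹ with hx
        have hxne : x ≠ 0 := mul_ne_zero hane (inv_ne_zero hbne)
        have habq : (a : ZMod p) ^ q = (b : ZMod p) ^ q := by
          have : ((a ^ q : ℕ) : ZMod p) = ((D : ℕ) : ZMod p) + ((b ^ q : ℕ) : ZMod p) := by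
            rw [← Nat.cast_add]; congr 1; omega
          rw [(ZMod.natCast_eq_zero_iff D p).mpr hpD, zero_add] at this
          push_cast at this; exact this
        have hxq : x ^ q = 1 := by
          rw [hx, mul_pow, habq, ← mul_pow, mul_inv_cancel₀ hbne, one_pow]
        have hord : orderOf x ∣ q := orderOf_dvd_of_pow_eq_one hxq
        have hcopord : Nat.Coprime (orderOf x) ℓ := by
          rcases (Nat.Prime.eq_one_or_self_of_dvd hq _ hord) with h1 | h1
          · rw [h1]; exact Nat.coprime_one_left ℓ
          · rw [h1]; exact (Nat.coprime_primes hq hℓ).mpr (by omega)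
        -- so p must be in F
        have hpF : p ∈ F := by
          by_contra hpF
          exact hcon p hpF hp hpa hpb hcopord
        have hplt : p < q := by
          have := Finset.le_sup (f := id) hpF
          simp only [id] at this; omega
        -- order ∣ p - 1 < q so order = 1
        have hord1 : orderOf x = 1 := by
          have h2 : orderOf x ∣ p - 1 :=
            orderOf_dvd_of_pow_eq_one (ZMod.pow_card_sub_one_eq_one hxne)
          have hle : orderOf x ≤ p - 1 := Nat.le_of_dvd (by have := hp.two_le; omega) h2
          rcases (Nat.Prime.eq_one_or_self_of_dvd hq _ hord) with h1 | h1
          · exact h1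
          · omega
        have hxeq : (a : ZMod p) = (b : ZMod p) := by
          have := orderOf_eq_one_iff.mp hord1
          rw [hx] at this
          field_simp at this
          exact this
        have hpc : p ∣ c := by
          have : ((c : ℕ) : ZMod p) = 0 := by
            rw [hc, Nat.cast_sub hba.le, hxeq, sub_self]
          exact (ZMod.natCast_eq_zero_iff c p).mp this
        -- p ∤ S
        have hpS : ¬ p ∣ S := by
          intro hpS
          have h0 : ((S : ℕ) : ZMod p) = 0 := (ZMod.natCast_eq_zero_iff S p).mpr hpS
          have hSval : ((S : ℕ) : ZMod p) = (q : ZMod p) * (b : ZMod p) ^ (q - 1) := by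
            rw [hS]
            push_cast
            have : ∀ i ∈ Finset.range q,
                (a : ZMod p) ^ i * (b : ZMod p) ^ (q - 1 - i) = (b : ZMod p) ^ (q - 1) := by
              intro i hi
              rw [hxeq, ← pow_add]
              congr 1
              have := Finset.mem_range.mp hi
              omega
            rw [Finset.sum_congr rfl this, Finset.sum_const, Finset.card_range, nsmul_eq_mul]
          have hqne : (q : ZMod p) ≠ 0 := by
            simp only [Ne, ZMod.natCast_eq_zero_iff]
            intro hdvd
            have := (Nat.prime_dvd_prime_iff_eq hp hq).mp hdvd
            omega
          rw [hSval] at h0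
          exact (mul_ne_zero hqne (pow_ne_zero _ hbne)) h0
        rw [hDS, Nat.factorization_mul hc0.ne' (by omega)]
        simp [Nat.factorization_eq_zero_of_not_dvd hpS]
      · rw [Nat.factorization_eq_zero_of_not_dvd hpD]; exact Nat.zero_le _
    · rw [Nat.factorization_eq_zero_of_not_prime _ hp]; exact Nat.zero_le _
  have hdvd : D ∣ c := (Nat.factorization_le_iff_dvd hD0.ne' hc0.ne').mp
    (Finsupp.le_def.mpr key)
  have : D ≤ c := Nat.le_of_dvd hc0 hdvd
  have : c * S ≤ c := hDS ▸ this
  nlinarith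

theorem stmt_15 (r : ℚ) (hr : 1 < r) (ℓ : ℕ) (hℓ : ℓ.Prime) :
    {p : ℕ | p.Prime ∧ ¬ (p : ℤ) ∣ r.num ∧ ¬ p ∣ r.den ∧
      Nat.Coprime (orderOf ((r.num : ZMod p) * (r.den : ZMod p)⁻¹)) ℓ}.Infinite := by
  have hden : (r.den : ℤ) < r.num := by
    have h := Rat.num_div_den r
    have hd : (0:ℚ) < (r.den : ℚ) := by exact_mod_cast r.pos
    rw [← h, lt_div_iff₀ hd, one_mul] at hr
    exact_mod_cast hr
  set a := r.num.toNat with hadef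
  have hnum : r.num = (a : ℤ) := by
    rw [hadef, Int.toNat_of_nonneg (by positivity)]
  have hba : r.den < a := by exact_mod_cast hnum ▸ hden
  have hcop : Nat.Coprime a r.den := by
    have := r.reduced
    rwa [show r.num.natAbs = a by rw [hnum]; exact Int.natAbs_natCast a] at this
  by_contra hfin
  rw [Set.not_infinite] at hfin
  obtain ⟨p, hpF, hp, hpa, hpb, hcoprime⟩ :=
    exists_good a r.den r.pos hba hcop ℓ hℓ hfin.toFinset
  apply hpF
  rw [Set.Finite.mem_toFinset]
  refine ⟨hp, ?_, hpb, ?_⟩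
  · rw [hnum]
    exact_mod_cast fun h => hpa (Int.ofNat_dvd.mp h)
  · have : ((r.num : ℤ) : ZMod p) = (a : ZMod p) := by rw [hnum]; push_cast; rfl
    rw [this]
    exact hcoprime
end
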